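/- For every particle configuration σ, the induced map [ρ] ↦ [σρ] on equivalence classes of rotor configurations on G is a well-defined bijection. Consequently the action of the sandpile monoid Q° on rotor configurations projects to a group action of the sandpile group S(G/T) on the set of equivalence classes of rotor configurations. -/

import Mathlib

open Function

/-- A strongly connected finite directed multigraph (self-loops and multiple arcs
allowed), given by source and head maps `src, head : E → V`, together with a nonempty
target set `T` and a rotor mechanism at each vertex: `next` is a cyclic ordering of
the arcs emanating from each vertex (it permutes the arcs, preserves the source, and
acts transitively on the arcs emanating from any fixed vertex). -/
structure RotorSystem (V E : Type) [Fintype V] [DecidableEq V] [Fintype E]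
    [DecidableEq E] where
  src : E → V
  head : E → V
  T : Finset V
  T_nonempty : T.Nonempty
  strongly_connected : ∀ v w : V,
    Relation.ReflTransGen (fun a b => ∃ e : E, src e = a ∧ head e = b) v w
  next : E → E
  next_src : ∀ e, src (next e) = src e
  next_bijective : Function.Bijective next
  next_cyclic : ∀ e e', src e = src e' → ∃ k : ℕ, next^[k] e = e'

namespace RotorSystem

variable {V E : Type} [Fintype V] [DecidableEq V] [Fintype E] [DecidableEq E]

/-- The set `V₀ = V - T` of non-target vertices. -/
abbrev V0 (S : RotorSystem V E) : Type := {v : V // v ∉ S.T}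

/-- A rotor configuration: each non-target vertex carries an arc emanating from it. -/
abbrev RConf (S : RotorSystem V E) : Type :=
  {ρ : S.V0 → E // ∀ v : S.V0, S.src (ρ v) = v.1}

/-- A particle configuration: a number of particles at each non-target vertex. -/
abbrev PConf (S : RotorSystem V E) : Type := S.V0 → ℕ

variable (S : RotorSystem V E)

/-- One step of a single particle's rotor walk: at a non-target vertex the rotor is
first progressed and the particle then moves along the new rotor arc; target vertices
absorb the particle. -/
def step (p : V × S.RConf) : V × S.RConf :=
  if h : p.1 ∈ S.T then p
  else
    (S.head (S.next (p.2.1 ⟨p.1, h⟩)),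
      ⟨Function.update p.2.1 ⟨p.1, h⟩ (S.next (p.2.1 ⟨p.1, h⟩)), by
        intro w
        rcases eq_or_ne w ⟨p.1, h⟩ with rfl | hw
        · rw [Function.update_self, S.next_src]
          exact p.2.2 ⟨p.1, h⟩
        · rw [Function.update_of_ne hw]
          exact p.2.2 w⟩)

open Classical in
/-- Route a single particle from `x` by rotor walk until it first reaches the target
set; the result is the pair (final position, final rotor configuration). -/
noncomputable def route (x : V) (ρ : S.RConf) : V × S.RConf :=
  if h : ∃ n, (S.step^[n] (x, ρ)).1 ∈ S.T then S.step^[Nat.find h] (x, ρ) else (x, ρ)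

/-- `t_x(ρ)`: the target vertex reached by a single particle started at `x` with
initial rotor configuration `ρ`. -/
noncomputable def tgt (x : V) (ρ : S.RConf) : V := (S.route x ρ).1

/-- The particle addition operator `E_v`: add one particle at `v` and route it to the
target set. -/
noncomputable def addAt (v : S.V0) (ρ : S.RConf) : S.RConf := (S.route v.1 ρ).2

/-- The action `σρ` of a particle configuration on a rotor configuration: place
`σ v` particles at each vertex `v` and route them all to the target set. -/
noncomputable def act (σ : S.PConf) (ρ : S.RConf) : S.RConf :=
  (Finset.univ : Finset S.V0).toList.foldr (fun v r => (S.addAt v)^[σ v] r) ρ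

/-- Equivalence of rotor configurations: `ρ ≡ ρ'` iff `σρ = σρ'` for some particle
configuration `σ`. -/
def REquiv (ρ ρ' : S.RConf) : Prop := ∃ σ : S.PConf, S.act σ ρ = S.act σ ρ'

/-- The outdegree `d(v)`. -/
def outdeg (v : V) : ℕ := (Finset.univ.filter fun e : E => S.src e = v).card

/-- The number `d(v,w)` of arcs from `v` to `w`. -/
def numArcs (v w : V) : ℕ :=
  (Finset.univ.filter fun e : E => S.src e = v ∧ S.head e = w).card

/-- A particle configuration is stable if every non-target vertex holds at most
`d(v) - 1` particles. -/
def IsStable (σ : S.PConf) : Prop := ∀ v : S.V0, σ v < S.outdeg v.1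

/-- Parallel toppling: every unstable vertex topples once, sending one particle along
each arc emanating from it. -/
def toppleStep (σ : S.PConf) : S.PConf := fun v =>
  (if S.outdeg v.1 ≤ σ v then σ v - S.outdeg v.1 else σ v) +
    ∑ w : S.V0, (if S.outdeg w.1 ≤ σ w then S.numArcs w.1 v.1 else 0)

open Classical in
/-- The stabilization `σ°` of a particle configuration. -/
noncomputable def stabilize (σ : S.PConf) : S.PConf :=
  if h : ∃ n, S.IsStable (S.toppleStep^[n] σ) then S.toppleStep^[Nat.find h] σ else σ

/-- A stable particle configuration is recurrent if it is reachable (by adding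
particles and stabilizing) from every particle configuration.  The recurrent
configurations form the sandpile group `S(G/T)` under addition-then-stabilization. -/
def IsRecurrent (τ : S.PConf) : Prop :=
  S.IsStable τ ∧ ∀ σ : S.PConf, ∃ τ' : S.PConf, τ = S.stabilize (τ' + σ)

/-- `e` is the identity element of the sandpile group `S(G/T)`. -/
def IsSandpileIdentity (e : S.PConf) : Prop :=
  S.IsRecurrent e ∧ ∀ τ : S.PConf, S.IsRecurrent τ → S.stabilize (e + τ) = τ

/-- The rotor arcs of `ρ`, as a relation on vertices. -/
def rotorRel (ρ : S.RConf) (a b : V) : Prop :=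
  ∃ h : a ∉ S.T, S.head (ρ.1 ⟨a, h⟩) = b

/-- A rotor configuration is acyclic if its rotor arcs contain no directed cycle. -/
def IsAcyclicConf (ρ : S.RConf) : Prop :=
  ∀ v : V, ¬ Relation.TransGen (S.rotorRel ρ) v v

/-- `ρ'` is obtained from `ρ` by pushing a cycle: there are distinct non-target
vertices `v_0, …, v_{r-1}` with the rotor arc of `v_j` pointing to `v_{j+1}`
(cyclically); each such rotor is regressed one step, other rotors are unchanged. -/
def IsCyclePush (ρ ρ' : S.RConf) : Prop :=
  ∃ r : ℕ, 0 < r ∧ ∃ f : ZMod r → S.V0, Function.Injective f ∧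
    (∀ j : ZMod r, S.head (ρ.1 (f j)) = (f (j + 1)).1) ∧
    (∀ j : ZMod r, S.next (ρ'.1 (f j)) = ρ.1 (f j)) ∧
    (∀ v : S.V0, v ∉ Set.range f → ρ'.1 v = ρ.1 v)

end RotorSystem
section Aux
namespace RotorSystem
set_option linter.unusedSectionVars false

variable {V E : Type} [Fintype V] [DecidableEq V] [Fintype E] [DecidableEq E]
variable (S : RotorSystem V E)

theorem src_iterate (k : ℕ) (e : E) : S.src (S.next^[k] e) = S.src e := by
  induction k with
  | zero => rfl
  | succ k ih => rw [Function.iterate_succ_apply', S.next_src, ih]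

theorem exists_period : ∃ N : ℕ, 0 < N ∧ ∀ e : E, S.next^[N] e = e := by
  classical
  set g : Equiv.Perm E := Equiv.ofBijective S.next S.next_bijective with hg
  have hiter : ∀ (n : ℕ) (e : E), (g ^ n) e = S.next^[n] e := by
    intro n
    induction n with
    | zero => intro e; rfl
    | succ n ih =>
      intro e
      rw [pow_succ, Equiv.Perm.mul_apply, Function.iterate_succ_apply, ih]
      rfl
  refine ⟨orderOf g, orderOf_pos g, fun e => ?_⟩
  rw [← hiter, pow_orderOf_eq_one g]; rfl

theorem period_mul {N : ℕ} (hper : ∀ e : E, S.next^[N] e = e) (t : ℕ) (e : E) :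
    S.next^[t * N] e = e := by
  induction t with
  | zero => simp
  | succ t ih =>
    rw [Nat.succ_mul, Function.iterate_add_apply, hper, ih]

/-- Single-particle termination: the rotor walk always reaches the target set. -/
theorem exists_hit (x : V) (ρ : S.RConf) : ∃ n, (S.step^[n] (x, ρ)).1 ∈ S.T := by
  classical
  by_contra Hc
  push_neg at Hc
  set p : ℕ → V := fun n => (S.step^[n] (x, ρ)).1 with hp
  set C : ℕ → S.RConf := fun n => (S.step^[n] (x, ρ)).2 with hC
  have H : ∀ n, p n ∉ S.T := Hc
  have hstep : ∀ n, S.step^[n+1] (x, ρ) = S.step (p n, C n) := by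
    intro n; rw [Function.iterate_succ_apply']
  have hpn : ∀ n, p (n+1) = S.head (S.next ((C n).1 ⟨p n, H n⟩)) := by
    intro n
    show (S.step^[n+1] (x, ρ)).1 = _
    rw [hstep n]
    simp only [step, dif_neg (H n)]
  have hCn : ∀ n, (C (n+1)).1
      = Function.update (C n).1 ⟨p n, H n⟩ (S.next ((C n).1 ⟨p n, H n⟩)) := by
    intro n
    show (S.step^[n+1] (x, ρ)).2.1 = _
    rw [hstep n]
    simp only [step, dif_neg (H n)]
  -- infinitely-often visits
  set InfOft : V → Prop := fun w => ∀ N, ∃ n, N ≤ n ∧ p n = w with hIO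
  have pig : ∃ w, InfOft w := by
    obtain ⟨y, hy⟩ := Finite.exists_infinite_fiber p
    refine ⟨y, fun N => ?_⟩
    have hinf : (p ⁻¹' {y}).Infinite := Set.infinite_coe_iff.mp hy
    obtain ⟨b, hb, hNb⟩ := hinf.exists_gt N
    exact ⟨b, le_of_lt hNb, hb⟩
  -- rotor dynamics at a fixed non-target vertex
  have infOft_next : ∀ w, w ∉ S.T → InfOft w → ∀ e : E, S.src e = w →
      InfOft (S.head e) := by
    intro w hw hio e he
    set r : ℕ → E := fun n => (C n).1 ⟨w, hw⟩ with hr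
    set cnt : ℕ → ℕ := fun n => ((Finset.range n).filter (fun i => p i = w)).card
      with hcnt
    have cnt_succ : ∀ n, cnt (n+1) = cnt n + if p n = w then 1 else 0 := by
      intro n
      simp only [hcnt, Finset.range_add_one, Finset.filter_insert]
      by_cases h : p n = w
      · rw [if_pos h, if_pos h, Finset.card_insert_of_notMem (by simp)]
      · rw [if_neg h, if_neg h, add_zero]
    have cnt_le : ∀ n, cnt n ≤ n := by
      intro n
      calc cnt n ≤ (Finset.range n).card := Finset.card_filter_le _ _
        _ = n := Finset.card_range n
    have r_step : ∀ n, r (n+1) = if p n = w then S.next (r n) else r n := by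
      intro n
      show (C (n+1)).1 ⟨w, hw⟩ = _
      rw [hCn n, Function.update_apply]
      rcases eq_or_ne (p n) w with h | h
      · have hsub : (⟨w, hw⟩ : S.V0) = ⟨p n, H n⟩ := Subtype.ext h.symm
        rw [if_pos hsub, if_pos h, ← hsub]
      · rw [if_neg (fun hc => h (congrArg Subtype.val hc).symm), if_neg h]
    have r_eq : ∀ n, r n = S.next^[cnt n] (r 0) := by
      intro n
      induction n with
      | zero => simp [hcnt]
      | succ n ih =>
        rw [r_step n, cnt_succ n]
        by_cases h : p n = w
        · rw [if_pos h, if_pos h, ih]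
          exact (Function.iterate_succ_apply' _ _ _).symm
        · rw [if_neg h, if_neg h, add_zero, ih]
    have cnt_unbounded : ∀ M, ∃ n, M ≤ cnt n := by
      intro M
      induction M with
      | zero => exact ⟨0, Nat.zero_le _⟩
      | succ M ih =>
        obtain ⟨n, hn⟩ := ih
        obtain ⟨n', hn', hpn'⟩ := hio n
        refine ⟨n' + 1, ?_⟩
        have hmono : cnt n ≤ cnt n' := by
          apply Finset.card_le_card
          apply Finset.filter_subset_filter
          exact Finset.range_subset_range.mpr hn'
        rw [cnt_succ n', if_pos hpn']
        omega
    have exists_visit : ∀ j, ∃ n, p n = w ∧ cnt n = j := by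
      intro j
      have hex : ∃ n, j + 1 ≤ cnt n := cnt_unbounded (j+1)
      have hm0 : Nat.find hex ≠ 0 := by
        intro h0
        have := Nat.find_spec hex
        rw [h0] at this
        simp [hcnt] at this
      obtain ⟨m', hm'⟩ := Nat.exists_eq_succ_of_ne_zero hm0
      have hlt : ¬ (j + 1 ≤ cnt m') :=
        Nat.find_min hex (by rw [hm']; exact Nat.lt_succ_self m')
      have hspec : j + 1 ≤ cnt (m' + 1) := by
        have := Nat.find_spec hex
        rwa [hm'] at this
      rw [cnt_succ m'] at hspec
      by_cases h : p m' = w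
      · rw [if_pos h] at hspec
        exact ⟨m', h, by omega⟩
      · rw [if_neg h] at hspec
        omega
    -- now the main argument
    have hsrc0 : S.src (r 0) = w := (C 0).2 ⟨w, hw⟩
    obtain ⟨k, hk⟩ := S.next_cyclic (r 0) e (by rw [hsrc0, he])
    obtain ⟨Np, hNp, hper⟩ := S.exists_period
    intro N
    have hge : N + 1 ≤ (N + 1) * Np := Nat.le_mul_of_pos_right _ hNp
    set j := k + (N + 1) * Np - 1 with hj
    have hj1 : j + 1 = k + (N + 1) * Np := by omega
    obtain ⟨n, hpw, hcntn⟩ := exists_visit j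
    refine ⟨n + 1, by have := cnt_le n; omega, ?_⟩
    rw [hpn n]
    have hsub : (⟨p n, H n⟩ : S.V0) = ⟨w, hw⟩ := Subtype.ext hpw
    rw [hsub]
    show S.head (S.next (r n)) = S.head e
    rw [r_eq n, hcntn]
    rw [show S.next (S.next^[j] (r 0)) = S.next^[j+1] (r 0) from
      (Function.iterate_succ_apply' _ _ _).symm]
    rw [hj1, Function.iterate_add_apply, S.period_mul hper, hk]
  obtain ⟨w, hw⟩ := pig
  have key : ∀ u, Relation.ReflTransGen
      (fun a b => ∃ e : E, S.src e = a ∧ S.head e = b) w u → InfOft u := by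
    intro u h
    induction h with
    | refl => exact hw
    | @tail b c _ hstep' ih =>
      obtain ⟨e, he1, he2⟩ := hstep'
      have hbT : b ∉ S.T := by
        intro hbT
        obtain ⟨n, _, hn⟩ := ih 0
        exact H n (hn ▸ hbT)
      subst he2
      exact infOft_next b hbT ih e he1
  obtain ⟨t, ht⟩ := S.T_nonempty
  obtain ⟨n, _, hn⟩ := key t (S.strongly_connected w t) 0
  exact H n (hn ▸ ht)

/-- Multi-particle states: a multiset of particle positions and a rotor config. -/
def Good (s : Multiset V × S.RConf) : Prop := ∀ x ∈ s.1, x ∉ S.T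

/-- One particle moves one rotor step; particles reaching `T` are absorbed. -/
def Move (s t : Multiset V × S.RConf) : Prop :=
  ∃ x, x ∉ S.T ∧ x ∈ s.1 ∧
    t = (s.1.erase x + (if (S.step (x, s.2)).1 ∈ S.T then 0
        else {(S.step (x, s.2)).1}), (S.step (x, s.2)).2)

/-- `n`-step reachability. -/
def Nreach : ℕ → Multiset V × S.RConf → Multiset V × S.RConf → Prop
  | 0, s, t => s = t
  | n+1, s, t => ∃ u, S.Move s u ∧ Nreach n u t

theorem Nreach_trans {n m : ℕ} {s t u : Multiset V × S.RConf}
    (h1 : S.Nreach n s t) (h2 : S.Nreach m t u) : S.Nreach (n + m) s u := by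
  induction n generalizing s with
  | zero => rw [Nat.zero_add]; cases h1; exact h2
  | succ n ih =>
    obtain ⟨v, hv, h1'⟩ := h1
    rw [Nat.succ_add]
    exact ⟨v, hv, ih h1'⟩

theorem step_fst {x : V} (hx : x ∉ S.T) (ρ : S.RConf) :
    (S.step (x, ρ)).1 = S.head (S.next (ρ.1 ⟨x, hx⟩)) := by
  simp [step, dif_neg hx]

theorem step_snd {x : V} (hx : x ∉ S.T) (ρ : S.RConf) :
    (S.step (x, ρ)).2.1 = Function.update ρ.1 ⟨x, hx⟩ (S.next (ρ.1 ⟨x, hx⟩)) := by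
  simp [step, dif_neg hx]

theorem move_good {s t : Multiset V × S.RConf} (h : S.Move s t) (hs : S.Good s) :
    S.Good t := by
  obtain ⟨x, hx, hxs, rfl⟩ := h
  intro y hy
  rw [Multiset.mem_add] at hy
  rcases hy with hy | hy
  · exact hs y (Multiset.mem_of_mem_erase hy)
  · by_cases hT : (S.step (x, s.2)).1 ∈ S.T
    · rw [if_pos hT] at hy; simp at hy
    · rw [if_neg hT] at hy
      rw [Multiset.mem_singleton] at hy
      rw [hy]; exact hT

theorem step_comm {x y : V} (hx : x ∉ S.T) (hy : y ∉ S.T) (hxy : x ≠ y)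
    (ρ : S.RConf) :
    (S.step (y, (S.step (x, ρ)).2)).1 = (S.step (y, ρ)).1 ∧
    (S.step (y, (S.step (x, ρ)).2)).2 = (S.step (x, (S.step (y, ρ)).2)).2 := by
  have hne : (⟨y, hy⟩ : S.V0) ≠ ⟨x, hx⟩ := fun hc => hxy (congrArg Subtype.val hc).symm
  have hvalx : (S.step (x, ρ)).2.1 ⟨y, hy⟩ = ρ.1 ⟨y, hy⟩ := by
    rw [S.step_snd hx, Function.update_of_ne hne]
  have hvaly : (S.step (y, ρ)).2.1 ⟨x, hx⟩ = ρ.1 ⟨x, hx⟩ := by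
    rw [S.step_snd hy, Function.update_of_ne hne.symm]
  constructor
  · rw [S.step_fst hy, S.step_fst hy, hvalx]
  · apply Subtype.ext
    rw [S.step_snd hy, S.step_snd hx, S.step_snd hx, S.step_snd hy,
      Function.update_of_ne hne, Function.update_of_ne hne.symm]
    exact Function.update_comm hne.symm _ _ _

theorem diamond {s a b : Multiset V × S.RConf} (ha : S.Move s a) (hb : S.Move s b) :
    a = b ∨ ∃ c, S.Move a c ∧ S.Move b c := by
  obtain ⟨x, hx, hxs, rfl⟩ := ha
  obtain ⟨y, hy, hys, rfl⟩ := hb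
  by_cases hxy : x = y
  · subst hxy; left; rfl
  · right
    set ιx := (if (S.step (x, s.2)).1 ∈ S.T then 0
        else {(S.step (x, s.2)).1} : Multiset V) with hix
    set ιy := (if (S.step (y, s.2)).1 ∈ S.T then 0
        else {(S.step (y, s.2)).1} : Multiset V) with hiy
    obtain ⟨hfst1, hsnd1⟩ := S.step_comm hx hy hxy s.2
    obtain ⟨hfst2, hsnd2⟩ := S.step_comm hy hx (Ne.symm hxy) s.2
    refine ⟨(((s.1.erase x).erase y + ιx) + ιy,
      (S.step (y, (S.step (x, s.2)).2)).2), ⟨y, hy, ?_, ?_⟩, ⟨x, hx, ?_, ?_⟩⟩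
    · rw [Multiset.mem_add]
      left
      rw [Multiset.mem_erase_of_ne (Ne.symm hxy)]
      exact hys
    · have herase : (s.1.erase x + ιx).erase y = (s.1.erase x).erase y + ιx := by
        apply Multiset.erase_add_left_pos
        rw [Multiset.mem_erase_of_ne (Ne.symm hxy)]
        exact hys
      have : (if (S.step (y, (s.1.erase x + ιx, (S.step (x, s.2)).2).2)).1 ∈ S.T
          then 0 else {(S.step (y, (s.1.erase x + ιx, (S.step (x, s.2)).2).2)).1})
          = ιy := by
        show (if (S.step (y, (S.step (x, s.2)).2)).1 ∈ S.T then (0:Multiset V)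
          else {(S.step (y, (S.step (x, s.2)).2)).1}) = ιy
        rw [hfst1, hiy]
      rw [this]
      show (_, _) = (_, _)
      rw [herase]
    · rw [Multiset.mem_add]
      left
      rw [Multiset.mem_erase_of_ne hxy]
      exact hxs
    · have herase : (s.1.erase y + ιy).erase x = (s.1.erase y).erase x + ιy := by
        apply Multiset.erase_add_left_pos
        rw [Multiset.mem_erase_of_ne hxy]
        exact hxs
      have hite : (if (S.step (x, (s.1.erase y + ιy, (S.step (y, s.2)).2).2)).1 ∈ S.T
          then 0 else {(S.step (x, (s.1.erase y + ιy, (S.step (y, s.2)).2).2)).1})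
          = ιx := by
        show (if (S.step (x, (S.step (y, s.2)).2)).1 ∈ S.T then (0:Multiset V)
          else {(S.step (x, (S.step (y, s.2)).2)).1}) = ιx
        rw [hfst2, hix]
      rw [hite, herase, Prod.mk.injEq]
      constructor
      · rw [Multiset.erase_comm]
        exact add_right_comm _ _ _
      · exact hsnd1

theorem lift_run (x : V) (hx : x ∉ S.T) (ρ : S.RConf) (ν : Multiset V) (n : ℕ)
    (h : ∀ i < n, (S.step^[i] (x, ρ)).1 ∉ S.T) :
    S.Nreach n (ν + {x}, ρ)
      (ν + (if (S.step^[n] (x, ρ)).1 ∈ S.T then 0 else {(S.step^[n] (x, ρ)).1}),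
        (S.step^[n] (x, ρ)).2) := by
  induction n with
  | zero =>
    show (ν + {x}, ρ) = _
    rw [Function.iterate_zero_apply]
    rw [if_neg hx]
  | succ n ih =>
    have hn : ∀ i < n, (S.step^[i] (x, ρ)).1 ∉ S.T := fun i hi => h i (hi.trans n.lt_succ_self)
    have hpn : (S.step^[n] (x, ρ)).1 ∉ S.T := h n n.lt_succ_self
    have ih' := ih hn
    rw [if_neg hpn] at ih'
    have hmove : S.Move (ν + {(S.step^[n] (x, ρ)).1}, (S.step^[n] (x, ρ)).2)
        (ν + (if (S.step^[n+1] (x, ρ)).1 ∈ S.T then 0 else {(S.step^[n+1] (x, ρ)).1}),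
          (S.step^[n+1] (x, ρ)).2) := by
      refine ⟨(S.step^[n] (x, ρ)).1, hpn, ?_, ?_⟩
      · rw [Multiset.mem_add]; right; exact Multiset.mem_singleton_self _
      · have herase : (ν + {(S.step^[n] (x, ρ)).1}).erase (S.step^[n] (x, ρ)).1 = ν := by
          rw [add_comm, Multiset.singleton_add, Multiset.erase_cons_head]
        have hred : S.step ((S.step^[n] (x, ρ)).1,
            (ν + {(S.step^[n] (x, ρ)).1}, (S.step^[n] (x, ρ)).2).2)
            = S.step^[n+1] (x, ρ) :=
          (Function.iterate_succ_apply' S.step n (x, ρ)).symm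
        rw [Prod.mk.injEq]
        refine ⟨?_, ?_⟩
        · rw [hred, herase]
        · rw [hred]
    have := S.Nreach_trans ih' (show S.Nreach 1 _ _ from ⟨_, hmove, rfl⟩)
    exact this

theorem exists_run_to_zero (s : Multiset V × S.RConf) (hs : S.Good s) :
    ∃ n t, S.Nreach n s t ∧ t.1 = 0 := by
  classical
  suffices H : ∀ (N : ℕ) (s : Multiset V × S.RConf), Multiset.card s.1 ≤ N →
      S.Good s → ∃ n t, S.Nreach n s t ∧ t.1 = 0 from
    H (Multiset.card s.1) s le_rfl hs
  intro N
  induction N with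
  | zero =>
    intro s hcard _
    refine ⟨0, s, rfl, ?_⟩
    rw [← Multiset.card_eq_zero]
    omega
  | succ N ih =>
    intro s hcard hgood
    by_cases h0 : s.1 = 0
    · exact ⟨0, s, rfl, h0⟩
    · obtain ⟨x, hxs⟩ := Multiset.exists_mem_of_ne_zero h0
      have hx : x ∉ S.T := hgood x hxs
      have hhit := S.exists_hit x s.2
      have hmin : ∀ i < Nat.find hhit, (S.step^[i] (x, s.2)).1 ∉ S.T :=
        fun i hi => Nat.find_min hhit hi
      have hrun := S.lift_run x hx s.2 (s.1.erase x) (Nat.find hhit) hmin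
      rw [if_pos (Nat.find_spec hhit), add_zero] at hrun
      have hstart : (s.1.erase x + {x}, s.2) = s := by
        rw [Prod.mk.injEq]
        refine ⟨?_, rfl⟩
        rw [add_comm, Multiset.singleton_add, Multiset.cons_erase hxs]
      rw [hstart] at hrun
      set mid := (s.1.erase x, (S.step^[Nat.find hhit] (x, s.2)).2) with hmid
      have hcard' : Multiset.card mid.1 ≤ N := by
        show Multiset.card (s.1.erase x) ≤ N
        rw [Multiset.card_erase_of_mem hxs, Nat.pred_eq_sub_one]
        have hpos : 0 < Multiset.card s.1 := Multiset.card_pos.mpr h0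
        omega
      have hgood' : S.Good mid := fun y hy =>
        hgood y (Multiset.mem_of_mem_erase hy)
      obtain ⟨n, t, hrun2, ht⟩ := ih mid hcard' hgood'
      exact ⟨_, t, S.Nreach_trans hrun hrun2, ht⟩

theorem no_move_of_zero {s t : Multiset V × S.RConf} (h0 : s.1 = 0) :
    ¬ S.Move s t := by
  rintro ⟨x, _, hxs, _⟩
  rw [h0] at hxs
  exact absurd hxs (Multiset.notMem_zero x)

theorem terminal_run_unique : ∀ (n : ℕ) (s t : Multiset V × S.RConf), S.Good s →
    S.Nreach n s t → t.1 = 0 →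
    ∀ (m : ℕ) (u : Multiset V × S.RConf), S.Nreach m s u → u.1 = 0 → u = t ∧ m = n := by
  intro n
  induction n using Nat.strong_induction_on with
  | _ n IH =>
  intro s t hgood hst ht m u hsu hu
  cases n with
  | zero =>
    have hst' : s = t := hst
    subst hst'
    cases m with
    | zero =>
      have hsu' : s = u := hsu
      subst hsu'
      exact ⟨rfl, rfl⟩
    | succ m =>
      obtain ⟨b, hb, _⟩ := hsu
      exact absurd hb (S.no_move_of_zero ht)
  | succ n' =>
    obtain ⟨a, ha, hat⟩ := hst
    cases m with
    | zero =>
      have hsu' : s = u := hsu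
      subst hsu'
      exact absurd ha (S.no_move_of_zero hu)
    | succ m' =>
      obtain ⟨b, hb, hbu⟩ := hsu
      have hgooda : S.Good a := S.move_good ha hgood
      have hgoodb : S.Good b := S.move_good hb hgood
      rcases S.diamond ha hb with rfl | ⟨c, hac, hbc⟩
      · obtain ⟨h1, h2⟩ := IH n' n'.lt_succ_self a t hgooda hat ht m' u hbu hu
        exact ⟨h1, by omega⟩
      · have hgoodc : S.Good c := S.move_good hac hgooda
        obtain ⟨k, w, hcw, hw⟩ := S.exists_run_to_zero c hgoodc
        have haw : S.Nreach (k+1) a w := ⟨c, hac, hcw⟩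
        obtain ⟨hwt, hkn⟩ := IH n' n'.lt_succ_self a t hgooda hat ht (k+1) w haw hw
        have hbt : S.Nreach n' b t := by
          have hbt' : S.Nreach (k+1) b t := ⟨c, hbc, hwt ▸ hcw⟩
          rwa [hkn] at hbt'
        obtain ⟨h1, h2⟩ := IH n' n'.lt_succ_self b t hgoodb hbt ht m' u hbu hu
        exact ⟨h1, by omega⟩

theorem addAt_run (v : S.V0) (ρ : S.RConf) (ν : Multiset V) :
    ∃ n, S.Nreach n (ν + {v.1}, ρ) (ν, S.addAt v ρ) := by
  classical
  have hhit := S.exists_hit v.1 ρ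
  have hmin : ∀ i < Nat.find hhit, (S.step^[i] (v.1, ρ)).1 ∉ S.T :=
    fun i hi => Nat.find_min hhit hi
  have hrun := S.lift_run v.1 v.2 ρ ν (Nat.find hhit) hmin
  rw [if_pos (Nat.find_spec hhit), add_zero] at hrun
  refine ⟨Nat.find hhit, ?_⟩
  have haddAt : S.addAt v ρ = (S.step^[Nat.find hhit] (v.1, ρ)).2 := by
    show (S.route v.1 ρ).2 = _
    rw [route, dif_pos hhit]
  rw [haddAt]
  exact hrun

theorem iter_run (k : ℕ) (v : S.V0) (ρ : S.RConf) (ν : Multiset V) :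
    ∃ n, S.Nreach n (ν + k • ({v.1} : Multiset V), ρ) (ν, (S.addAt v)^[k] ρ) := by
  induction k generalizing ρ with
  | zero =>
    refine ⟨0, ?_⟩
    show (ν + 0 • ({v.1} : Multiset V), ρ) = (ν, ρ)
    rw [zero_nsmul, add_zero]
  | succ k ih =>
    obtain ⟨n1, h1⟩ := S.addAt_run v ρ (ν + k • ({v.1} : Multiset V))
    obtain ⟨n2, h2⟩ := ih (S.addAt v ρ)
    refine ⟨n1 + n2, ?_⟩
    have heq : ν + (k+1) • ({v.1} : Multiset V)
        = (ν + k • ({v.1} : Multiset V)) + {v.1} := by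
      rw [succ_nsmul, add_assoc]
    rw [heq, Function.iterate_succ_apply]
    exact S.Nreach_trans h1 h2

theorem fold_run (l : List S.V0) (σ : S.PConf) (ρ : S.RConf) (ν : Multiset V) :
    ∃ n, S.Nreach n (ν + (l.map fun v => σ v • ({v.1} : Multiset V)).sum, ρ)
      (ν, l.foldr (fun v r => (S.addAt v)^[σ v] r) ρ) := by
  induction l generalizing ρ ν with
  | nil =>
    refine ⟨0, ?_⟩
    show (ν + ([] : List (Multiset V)).sum, ρ) = (ν, ρ)
    rw [List.sum_nil, add_zero]
  | cons v l ih =>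
    obtain ⟨n1, h1⟩ := ih ρ (ν + σ v • ({v.1} : Multiset V))
    obtain ⟨n2, h2⟩ := S.iter_run (σ v) v
      (l.foldr (fun v r => (S.addAt v)^[σ v] r) ρ) ν
    refine ⟨n1 + n2, ?_⟩
    rw [List.map_cons, List.sum_cons, List.foldr_cons, ← add_assoc]
    exact S.Nreach_trans h1 h2

def mu (σ : S.PConf) : Multiset V := ∑ v : S.V0, σ v • ({v.1} : Multiset V)

theorem mu_list (σ : S.PConf) :
    ((Finset.univ : Finset S.V0).toList.map fun v => σ v • ({v.1} : Multiset V)).sum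
      = S.mu σ :=
  Finset.sum_map_toList _ _

theorem mu_good (σ : S.PConf) (ρ : S.RConf) : S.Good (S.mu σ, ρ) := by
  intro x hx
  rw [mu, Multiset.mem_sum] at hx
  obtain ⟨v, _, hv⟩ := hx
  have := Multiset.mem_of_mem_nsmul hv
  rw [Multiset.mem_singleton] at this
  rw [this]
  exact v.2

theorem mu_add (σ τ : S.PConf) : S.mu (σ + τ) = S.mu σ + S.mu τ := by
  rw [mu, mu, mu, ← Finset.sum_add_distrib]
  apply Finset.sum_congr rfl
  intro v _
  show (σ v + τ v) • _ = _
  rw [add_nsmul]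

theorem act_run (σ : S.PConf) (ρ : S.RConf) :
    ∃ n, S.Nreach n (S.mu σ, ρ) (0, S.act σ ρ) := by
  obtain ⟨n, h⟩ := S.fold_run (Finset.univ : Finset S.V0).toList σ ρ 0
  rw [S.mu_list, zero_add] at h
  exact ⟨n, h⟩

theorem act_add (σ τ : S.PConf) (ρ : S.RConf) :
    S.act (σ + τ) ρ = S.act σ (S.act τ ρ) := by
  obtain ⟨n1, h1⟩ := S.act_run (σ + τ) ρ
  obtain ⟨n2, h2⟩ := S.fold_run (Finset.univ : Finset S.V0).toList τ ρ (S.mu σ)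
  obtain ⟨n3, h3⟩ := S.act_run σ (S.act τ ρ)
  rw [S.mu_list] at h2
  have h2' : S.Nreach n2 (S.mu σ + S.mu τ, ρ) (S.mu σ, S.act τ ρ) := h2
  have hcomb : S.Nreach (n2 + n3) (S.mu σ + S.mu τ, ρ) (0, S.act σ (S.act τ ρ)) :=
    S.Nreach_trans h2' h3
  rw [← S.mu_add] at hcomb
  have := S.terminal_run_unique n1 _ _ (S.mu_good (σ+τ) ρ) h1 rfl _ _ hcomb rfl
  exact (congrArg Prod.snd this.1).symm

section Cycle
variable {v : V} {e : E}

theorem local_period_mul (hper : S.next^[m] e = e) (t : ℕ) :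
    S.next^[m * t] e = e := by
  induction t with
  | zero => simp
  | succ t ih => rw [Nat.mul_succ, Function.iterate_add_apply, hper, ih]

theorem period_not_lt (he : S.src e = v) {m : ℕ} (hm0 : 0 < m)
    (hmd : m < S.outdeg v) : S.next^[m] e ≠ e := by
  intro hper
  set A : Finset E := Finset.univ.filter (fun e' : E => S.src e' = v) with hA
  set B : Finset E := (Finset.range m).image (fun k => S.next^[k] e) with hB
  have hAB : A ⊆ B := by
    intro e' he'
    rw [hA, Finset.mem_filter] at he'
    obtain ⟨k, hk⟩ := S.next_cyclic e e' (by rw [he, he'.2])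
    rw [hB, Finset.mem_image]
    refine ⟨k % m, Finset.mem_range.mpr (Nat.mod_lt _ hm0), ?_⟩
    conv_rhs => rw [← hk]
    conv_rhs => rw [show k = m * (k / m) + k % m from (Nat.div_add_mod k m).symm]
    rw [Function.iterate_add_apply, ← Function.iterate_add_apply]
    rw [Nat.add_comm, Function.iterate_add_apply, S.local_period_mul hper]
  have h1 : S.outdeg v ≤ B.card := by
    rw [show S.outdeg v = A.card from rfl]
    exact Finset.card_le_card hAB
  have h2 : B.card ≤ m := le_trans Finset.card_image_le (le_of_eq (Finset.card_range m))
  omega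

theorem iter_injOn (he : S.src e = v) {i j : ℕ} (hi : i < S.outdeg v)
    (hj : j < S.outdeg v) (hij : S.next^[i] e = S.next^[j] e) : i = j := by
  rcases Nat.lt_trichotomy i j with h | h | h
  · exfalso
    have : S.next^[i] (S.next^[j-i] e) = S.next^[i] e := by
      rw [← Function.iterate_add_apply, Nat.add_sub_cancel' (le_of_lt h), ← hij]
    have hq := (S.next_bijective.injective.iterate i) this
    exact S.period_not_lt he (by omega) (by omega) hq
  · exact h
  · exfalso
    have : S.next^[j] (S.next^[i-j] e) = S.next^[j] e := by
      rw [← Function.iterate_add_apply, Nat.add_sub_cancel' (le_of_lt h), hij]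
    have hq := (S.next_bijective.injective.iterate j) this
    exact S.period_not_lt he (by omega) (by omega) hq

theorem orbit_eq (he : S.src e = v) :
    ((Multiset.range (S.outdeg v)).map fun i => S.next^[i] e)
      = (Finset.univ.filter (fun e' : E => S.src e' = v)).val := by
  set A : Finset E := Finset.univ.filter (fun e' : E => S.src e' = v) with hA
  have hnodup : (((Multiset.range (S.outdeg v)).map fun i => S.next^[i] e)).Nodup := by
    refine Multiset.Nodup.map_on ?_ (Multiset.nodup_range _)
    intro i hi j hj hij
    exact S.iter_injOn he (Multiset.mem_range.mp hi) (Multiset.mem_range.mp hj) hij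
  have hsub : ((Multiset.range (S.outdeg v)).map fun i => S.next^[i] e) ⊆ A.val := by
    intro a ha
    rw [Multiset.mem_map] at ha
    obtain ⟨i, _, rfl⟩ := ha
    rw [hA, Finset.mem_val, Finset.mem_filter]
    exact ⟨Finset.mem_univ _, by rw [S.src_iterate, he]⟩
  have hle := (Multiset.le_iff_subset hnodup).mpr hsub
  have hcard : Multiset.card A.val ≤
      Multiset.card ((Multiset.range (S.outdeg v)).map fun i => S.next^[i] e) := by
    rw [Multiset.card_map, Multiset.card_range]
    exact le_of_eq rfl
  exact Multiset.eq_of_le_of_card_le hle hcard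

theorem next_pow_outdeg (he : S.src e = v) : S.next^[S.outdeg v] e = e := by
  have hd : 0 < S.outdeg v := by
    rw [outdeg]
    refine Finset.card_pos.mpr ⟨e, ?_⟩
    rw [Finset.mem_filter]
    exact ⟨Finset.mem_univ _, he⟩
  have hmem : S.next^[S.outdeg v] e
      ∈ (Finset.univ.filter (fun e' : E => S.src e' = v)).val := by
    rw [Finset.mem_val, Finset.mem_filter]
    exact ⟨Finset.mem_univ _, by rw [S.src_iterate, he]⟩
  rw [← S.orbit_eq he, Multiset.mem_map] at hmem
  obtain ⟨i, hi, hie⟩ := hmem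
  rw [Multiset.mem_range] at hi
  rcases Nat.eq_zero_or_pos i with rfl | hipos
  · exact hie.symm ▸ hie
  · exfalso
    have : S.next^[i] (S.next^[S.outdeg v - i] e) = S.next^[i] e := by
      rw [← Function.iterate_add_apply, Nat.add_sub_cancel' (le_of_lt hi), hie]
    have hq := (S.next_bijective.injective.iterate i) this
    exact S.period_not_lt he (by omega) (by omega) hq

theorem orbit_shift_eq (he : S.src e = v) :
    ((Multiset.range (S.outdeg v)).map fun i => S.next^[i+1] e)
      = (Finset.univ.filter (fun e' : E => S.src e' = v)).val := by
  have h1 : ((Multiset.range (S.outdeg v)).map fun i => S.next^[i+1] e)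
      = (((Multiset.range (S.outdeg v)).map fun i => S.next^[i] e)).map S.next := by
    rw [Multiset.map_map]
    apply Multiset.map_congr rfl
    intro i _
    exact Function.iterate_succ_apply' S.next i e
  rw [h1, S.orbit_eq he]
  -- `next` permutes the arcs at `v`
  set A : Finset E := Finset.univ.filter (fun e' : E => S.src e' = v) with hA
  have hnodup : (A.val.map S.next).Nodup :=
    Multiset.Nodup.map S.next_bijective.injective A.nodup
  have hsub : A.val.map S.next ⊆ A.val := by
    intro a ha
    rw [Multiset.mem_map] at ha
    obtain ⟨b, hb, rfl⟩ := ha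
    rw [Finset.mem_val, hA, Finset.mem_filter] at hb ⊢
    exact ⟨Finset.mem_univ _, by rw [S.next_src, hb.2]⟩
  have hle := (Multiset.le_iff_subset hnodup).mpr hsub
  exact Multiset.eq_of_le_of_card_le hle (le_of_eq (Multiset.card_map _ _).symm)

end Cycle

theorem rotate_run (v : V) (hv : v ∉ S.T) (ρ : S.RConf) :
    S.Nreach (S.outdeg v) ((S.outdeg v) • ({v} : Multiset V), ρ)
      ((((Finset.univ.filter fun e' : E => S.src e' = v).val.map S.head).filter
        (fun x => x ∉ S.T)), ρ) := by
  classical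
  set d := S.outdeg v with hd
  have hesrc : S.src (ρ.1 ⟨v, hv⟩) = v := ρ.2 ⟨v, hv⟩
  set e := ρ.1 ⟨v, hv⟩ with he
  set P : ℕ → S.RConf := fun k => ⟨Function.update ρ.1 ⟨v, hv⟩ (S.next^[k] e), by
    intro w
    rcases eq_or_ne w ⟨v, hv⟩ with rfl | hw
    · rw [Function.update_self, S.src_iterate]
      exact hesrc
    · rw [Function.update_of_ne hw]
      exact ρ.2 w⟩ with hP
  set γ : ℕ → Multiset V := fun k =>
    (((Multiset.range k).map fun i => S.head (S.next^[i+1] e)).filter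
      (fun x => x ∉ S.T)) with hγ
  have hPval : ∀ k, (P k).1 ⟨v, hv⟩ = S.next^[k] e := fun k => by
    rw [hP]; exact Function.update_self _ _ _
  have main : ∀ k, k ≤ d → S.Nreach k (d • ({v}:Multiset V), ρ)
      ((d - k) • ({v}:Multiset V) + γ k, P k) := by
    intro k
    induction k with
    | zero =>
      intro _
      show (d • ({v}:Multiset V), ρ) = _
      have hγ0 : γ 0 = 0 := rfl
      have hP0 : P 0 = ρ := Subtype.ext (by
        show Function.update ρ.1 ⟨v, hv⟩ (S.next^[0] e) = ρ.1
        rw [Function.iterate_zero_apply]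
        exact Function.update_eq_self _ _)
      rw [Nat.sub_zero, hγ0, add_zero, hP0]
    | succ k ih =>
      intro hk1
      have hk : k ≤ d := Nat.le_of_succ_le hk1
      have ihk := ih hk
      have hmem : v ∈ (d - k) • ({v}:Multiset V) + γ k := by
        rw [Multiset.mem_add]
        left
        rw [Multiset.mem_nsmul]
        exact ⟨by omega, Multiset.mem_singleton_self v⟩
      have hsfst : (S.step (v, P k)).1 = S.head (S.next^[k+1] e) := by
        rw [S.step_fst hv, hPval k]
        exact congrArg S.head (Function.iterate_succ_apply' S.next k e).symm
      have hssnd : (S.step (v, P k)).2 = P (k+1) := by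
        apply Subtype.ext
        rw [S.step_snd hv, hPval k]
        show Function.update (Function.update ρ.1 ⟨v,hv⟩ (S.next^[k] e)) ⟨v,hv⟩
          (S.next (S.next^[k] e)) = Function.update ρ.1 ⟨v,hv⟩ (S.next^[k+1] e)
        rw [Function.update_idem, Function.iterate_succ_apply']
      have hmove : S.Move ((d - k) • ({v}:Multiset V) + γ k, P k)
          ((d - (k+1)) • ({v}:Multiset V) + γ (k+1), P (k+1)) := by
        refine ⟨v, hv, hmem, ?_⟩
        rw [Prod.mk.injEq]
        constructor
        · show _ = ((d - k) • ({v}:Multiset V) + γ k).erase v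
            + (if (S.step (v, P k)).1 ∈ S.T then 0 else {(S.step (v, P k)).1})
          rw [hsfst]
          have herase : ((d - k) • ({v}:Multiset V) + γ k).erase v
              = (d - k - 1) • ({v}:Multiset V) + γ k := by
            rw [Multiset.erase_add_left_pos _ (by
              rw [Multiset.mem_nsmul]
              exact ⟨by omega, Multiset.mem_singleton_self v⟩)]
            congr 1
            have h2 : (d - k) • ({v}:Multiset V)
                = (d - k - 1) • ({v}:Multiset V) + {v} := by
              conv_lhs => rw [show d - k = (d - k - 1) + 1 from by omega]
              rw [succ_nsmul]
            rw [h2, add_comm ((d - k - 1) • ({v}:Multiset V)) ({v} : Multiset V),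
              Multiset.singleton_add, Multiset.erase_cons_head]
          rw [herase]
          have hγs : γ (k+1) = (if S.head (S.next^[k+1] e) ∉ S.T
              then {S.head (S.next^[k+1] e)} else 0) + γ k := by
            rw [hγ]
            show (((Multiset.range (k+1)).map fun i => S.head (S.next^[i+1] e)).filter
              (fun x => x ∉ S.T)) = _
            rw [Multiset.range_succ, Multiset.map_cons, Multiset.filter_cons]
          rw [hγs, show d - (k+1) = d - k - 1 from by omega]
          by_cases hT : S.head (S.next^[k+1] e) ∈ S.T
          · rw [if_neg (by simpa using hT), if_pos hT, zero_add, add_zero]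
          · rw [if_pos hT, if_neg hT]
            abel
        · exact hssnd.symm
      have := S.Nreach_trans ihk (show S.Nreach 1 _ _ from ⟨_, hmove, rfl⟩)
      exact this
  have hfin := main d le_rfl
  have hPd : P d = ρ := Subtype.ext (by
    show Function.update ρ.1 ⟨v, hv⟩ (S.next^[d] e) = ρ.1
    rw [S.next_pow_outdeg hesrc]
    exact Function.update_eq_self _ _)
  have hγd : γ d = (((Finset.univ.filter fun e' : E => S.src e' = v).val.map
      S.head).filter (fun x => x ∉ S.T)) := by
    rw [hγ]
    show (((Multiset.range d).map fun i => S.head (S.next^[i+1] e)).filter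
      (fun x => x ∉ S.T)) = _
    have hmm : ((Multiset.range d).map fun i => S.head (S.next^[i+1] e))
        = (((Multiset.range d).map fun i => S.next^[i+1] e).map S.head) := by
      rw [Multiset.map_map]
      rfl
    rw [hmm, S.orbit_shift_eq hesrc]
  rw [Nat.sub_self, zero_nsmul, zero_add, hPd, hγd] at hfin
  exact hfin

theorem gamma_mu (v : V) :
    (((Finset.univ.filter fun e' : E => S.src e' = v).val.map S.head).filter
      (fun x => x ∉ S.T)) = S.mu (fun w => S.numArcs v w.1) := by
  classical
  refine Multiset.ext.mpr fun u => ?_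
  rw [Multiset.count_filter, mu, Multiset.count_sum']
  by_cases hu : u ∈ S.T
  · rw [if_neg (by simpa using hu)]
    symm
    apply Finset.sum_eq_zero
    intro w _
    rw [Multiset.count_nsmul, Multiset.count_singleton,
      if_neg (fun h => w.2 (by rw [← h]; exact hu)), mul_zero]
  · rw [if_pos hu]
    rw [Finset.sum_eq_single (⟨u, hu⟩ : S.V0)]
    · rw [Multiset.count_nsmul, Multiset.count_singleton, if_pos rfl, mul_one,
        Multiset.count_map, numArcs]
      show _ = Multiset.card (Finset.univ.filter
        fun e : E => S.src e = v ∧ S.head e = u).val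
      rw [Finset.filter_val, Finset.filter_val, Multiset.filter_filter]
      congr 1
      apply Multiset.filter_congr
      intro a _
      constructor
      · rintro ⟨h1, h2⟩; exact ⟨h2, h1.symm⟩
      · rintro ⟨h1, h2⟩; exact ⟨h2.symm, h1⟩
    · intro w _ hw
      rw [Multiset.count_nsmul, Multiset.count_singleton,
        if_neg (fun h => hw (Subtype.ext h.symm)), mul_zero]
    · intro h
      exact absurd (Finset.mem_univ _) h

/-- The particle configuration with `k` particles at `v`. -/
def deltaConf (v : S.V0) (k : ℕ) : S.PConf := fun w => if w = v then k else 0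

theorem mu_delta (v : S.V0) (k : ℕ) :
    S.mu (S.deltaConf v k) = k • ({v.1} : Multiset V) := by
  rw [mu]
  rw [Finset.sum_eq_single v]
  · rw [deltaConf, if_pos rfl]
  · intro w _ hw
    show (if w = v then k else 0) • ({w.1} : Multiset V) = 0
    rw [if_neg hw, zero_nsmul]
  · intro h
    exact absurd (Finset.mem_univ _) h

theorem key_topple (v : S.V0) (ρ : S.RConf) :
    S.act (S.deltaConf v (S.outdeg v.1)) ρ
      = S.act (fun w => S.numArcs v.1 w.1) ρ := by
  obtain ⟨n1, h1⟩ := S.act_run (S.deltaConf v (S.outdeg v.1)) ρ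
  rw [S.mu_delta] at h1
  have h2 := S.rotate_run v.1 v.2 ρ
  obtain ⟨n3, h3⟩ := S.act_run (fun w => S.numArcs v.1 w.1) ρ
  rw [← S.gamma_mu] at h3
  have hcomb := S.Nreach_trans h2 h3
  have hgood : S.Good ((S.outdeg v.1) • ({v.1} : Multiset V), ρ) := by
    intro x hx
    have := Multiset.mem_of_mem_nsmul hx
    rw [Multiset.mem_singleton] at this
    rw [this]
    exact v.2
  have := S.terminal_run_unique n1 _ _ hgood h1 rfl _ _ hcomb rfl
  exact (congrArg Prod.snd this.1).symm

set_option maxHeartbeats 1600000 in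
theorem act_topple (σ : S.PConf) (ρ : S.RConf) :
    S.act (S.toppleStep σ) ρ = S.act σ ρ := by
  classical
  set U : Finset S.V0 := Finset.univ.filter (fun v => S.outdeg v.1 ≤ σ v) with hU
  set rest : S.PConf := fun w => if S.outdeg w.1 ≤ σ w then σ w - S.outdeg w.1
    else σ w with hrest
  have hmemU : ∀ w : S.V0, w ∈ U ↔ S.outdeg w.1 ≤ σ w := fun w => by
    rw [hU, Finset.mem_filter]
    simp
  have hσ : σ = rest + ∑ v ∈ U, S.deltaConf v (S.outdeg v.1) := by
    funext w
    show σ w = rest w + (∑ v ∈ U, S.deltaConf v (S.outdeg v.1)) w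
    rw [Finset.sum_apply]
    have hsum : (∑ v ∈ U, S.deltaConf v (S.outdeg v.1) w)
        = if w ∈ U then S.outdeg w.1 else 0 := by
      have hc : ∀ v ∈ U, S.deltaConf v (S.outdeg v.1) w
          = if w = v then S.outdeg v.1 else 0 := fun v _ => rfl
      rw [Finset.sum_congr rfl hc, Finset.sum_ite_eq]
    rw [hsum]
    show σ w = (if S.outdeg w.1 ≤ σ w then σ w - S.outdeg w.1 else σ w)
      + (if w ∈ U then S.outdeg w.1 else 0)
    by_cases h : S.outdeg w.1 ≤ σ w
    · rw [if_pos h, if_pos ((hmemU w).mpr h)]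
      omega
    · rw [if_neg h, if_neg (fun hc => h ((hmemU w).mp hc)), add_zero]
  have htop : S.toppleStep σ = rest + ∑ v ∈ U, (fun w => S.numArcs v.1 w.1) := by
    funext w
    show S.toppleStep σ w = rest w + (∑ v ∈ U, (fun w => S.numArcs v.1 w.1)) w
    rw [Finset.sum_apply]
    show (if S.outdeg w.1 ≤ σ w then σ w - S.outdeg w.1 else σ w)
        + ∑ u : S.V0, (if S.outdeg u.1 ≤ σ u then S.numArcs u.1 w.1 else 0)
      = (if S.outdeg w.1 ≤ σ w then σ w - S.outdeg w.1 else σ w)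
        + ∑ v ∈ U, S.numArcs v.1 w.1
    congr 1
    rw [hU, Finset.sum_filter]
  have act_sum : ∀ (W : Finset S.V0) (ρ : S.RConf),
      S.act (∑ v ∈ W, S.deltaConf v (S.outdeg v.1)) ρ
        = S.act (∑ v ∈ W, (fun w => S.numArcs v.1 w.1)) ρ := by
    intro W
    induction W using Finset.induction_on with
    | empty => intro ρ; rw [Finset.sum_empty, Finset.sum_empty]
    | @insert a s ha ih =>
      intro ρ
      rw [Finset.sum_insert ha, Finset.sum_insert ha, S.act_add, S.act_add, ih,
        S.key_topple]
  calc S.act (S.toppleStep σ) ρ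
      = S.act (rest + ∑ v ∈ U, (fun w => S.numArcs v.1 w.1)) ρ := by rw [← htop]
    _ = S.act rest (S.act (∑ v ∈ U, (fun w => S.numArcs v.1 w.1)) ρ) :=
        S.act_add _ _ _
    _ = S.act rest (S.act (∑ v ∈ U, S.deltaConf v (S.outdeg v.1)) ρ) := by
        rw [act_sum]
    _ = S.act (rest + ∑ v ∈ U, S.deltaConf v (S.outdeg v.1)) ρ :=
        (S.act_add _ _ _).symm
    _ = S.act σ ρ := by rw [← hσ]

theorem act_stabilize (σ : S.PConf) (ρ : S.RConf) :
    S.act (S.stabilize σ) ρ = S.act σ ρ := by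
  have hiter : ∀ n, S.act (S.toppleStep^[n] σ) ρ = S.act σ ρ := by
    intro n
    induction n with
    | zero => rfl
    | succ n ih => rw [Function.iterate_succ_apply', S.act_topple, ih]
  rw [stabilize]
  split
  · exact hiter _
  · rfl

theorem requiv_of_eq {ρ ρ' : S.RConf} (h : ρ = ρ') : S.REquiv ρ ρ' :=
  ⟨0, by rw [h]⟩

theorem requiv_refl (ρ : S.RConf) : S.REquiv ρ ρ := ⟨0, rfl⟩

theorem requiv_symm {ρ ρ' : S.RConf} (h : S.REquiv ρ ρ') : S.REquiv ρ' ρ := by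
  obtain ⟨τ, hτ⟩ := h
  exact ⟨τ, hτ.symm⟩

theorem requiv_act {σ : S.PConf} {ρ ρ' : S.RConf} (h : S.REquiv ρ ρ') :
    S.REquiv (S.act σ ρ) (S.act σ ρ') := by
  obtain ⟨τ, hτ⟩ := h
  refine ⟨τ, ?_⟩
  calc S.act τ (S.act σ ρ) = S.act (τ + σ) ρ := (S.act_add _ _ _).symm
    _ = S.act (σ + τ) ρ := by rw [add_comm]
    _ = S.act σ (S.act τ ρ) := S.act_add _ _ _
    _ = S.act σ (S.act τ ρ') := by rw [hτ]
    _ = S.act (σ + τ) ρ' := (S.act_add _ _ _).symm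
    _ = S.act (τ + σ) ρ' := by rw [add_comm]
    _ = S.act τ (S.act σ ρ') := S.act_add _ _ _

theorem requiv_cancel {σ : S.PConf} {ρ ρ' : S.RConf}
    (h : S.REquiv (S.act σ ρ) (S.act σ ρ')) : S.REquiv ρ ρ' := by
  obtain ⟨τ, hτ⟩ := h
  refine ⟨τ + σ, ?_⟩
  calc S.act (τ + σ) ρ = S.act τ (S.act σ ρ) := S.act_add _ _ _
    _ = S.act τ (S.act σ ρ') := hτ
    _ = S.act (τ + σ) ρ' := (S.act_add _ _ _).symm

theorem requiv_trans {a b c : S.RConf} (h1 : S.REquiv a b) (h2 : S.REquiv b c) :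
    S.REquiv a c := by
  obtain ⟨τ, hτ⟩ := h1
  obtain ⟨τ', hτ'⟩ := h2
  refine ⟨τ' + τ, ?_⟩
  calc S.act (τ' + τ) a = S.act τ' (S.act τ a) := S.act_add _ _ _
    _ = S.act τ' (S.act τ b) := by rw [hτ]
    _ = S.act (τ' + τ) b := (S.act_add _ _ _).symm
    _ = S.act (τ + τ') b := by rw [add_comm]
    _ = S.act τ (S.act τ' b) := S.act_add _ _ _
    _ = S.act τ (S.act τ' c) := by rw [hτ']
    _ = S.act (τ + τ') c := (S.act_add _ _ _).symm
    _ = S.act (τ' + τ) c := by rw [add_comm]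

end RotorSystem
end Aux

/-- **Corollary (the sandpile group acts on equivalence classes).**
For every particle configuration `σ`, the induced map `[ρ] ↦ [σρ]` on equivalence
classes of rotor configurations is well defined and bijective.  Consequently the
action of the sandpile monoid projects to a group action of the sandpile group
`S(G/T)` on equivalence classes: the action is compatible with
addition-then-stabilization and the identity `e` acts trivially. -/
theorem act_permutes_classes {V E : Type} [Fintype V] [DecidableEq V] [Fintype E]
    [DecidableEq E] (S : RotorSystem V E)
    (e : S.PConf) (he : S.IsSandpileIdentity e) :
    (∀ (σ : S.PConf) (ρ ρ' : S.RConf),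
        S.REquiv ρ ρ' → S.REquiv (S.act σ ρ) (S.act σ ρ')) ∧
    (∀ (σ : S.PConf) (ρ ρ' : S.RConf),
        S.REquiv (S.act σ ρ) (S.act σ ρ') → S.REquiv ρ ρ') ∧
    (∀ (σ : S.PConf) (ρ : S.RConf), ∃ ρ' : S.RConf, S.REquiv (S.act σ ρ') ρ) ∧
    (∀ (σ₁ σ₂ : S.PConf) (ρ : S.RConf),
        S.REquiv (S.act (S.stabilize (σ₁ + σ₂)) ρ) (S.act σ₁ (S.act σ₂ ρ))) ∧
    (∀ ρ : S.RConf, S.REquiv (S.act e ρ) ρ) := by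
  classical
  have part1 : ∀ (σ : S.PConf) (ρ ρ' : S.RConf),
      S.REquiv ρ ρ' → S.REquiv (S.act σ ρ) (S.act σ ρ') :=
    fun σ ρ ρ' h => S.requiv_act h
  have part2 : ∀ (σ : S.PConf) (ρ ρ' : S.RConf),
      S.REquiv (S.act σ ρ) (S.act σ ρ') → S.REquiv ρ ρ' :=
    fun σ ρ ρ' h => S.requiv_cancel h
  refine ⟨part1, part2, ?_, ?_, ?_⟩
  · -- surjectivity on classes
    intro σ ρ
    let st : Setoid S.RConf :=
      ⟨S.REquiv, ⟨S.requiv_refl, S.requiv_symm, S.requiv_trans⟩⟩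
    haveI : Finite S.RConf := Subtype.finite
    haveI : Finite (Quotient st) := Quotient.finite st
    let F : Quotient st → Quotient st :=
      Quotient.map (S.act σ) (fun a b h => part1 σ a b h)
    have hinj : Function.Injective F := by
      intro q1 q2
      induction q1 using Quotient.ind with
      | _ a =>
      induction q2 using Quotient.ind with
      | _ b =>
      intro hab
      have hab' : S.REquiv (S.act σ a) (S.act σ b) := Quotient.exact hab
      exact Quotient.sound (part2 σ a b hab')
    have hsurj : Function.Surjective F := Finite.surjective_of_injective hinj
    obtain ⟨q, hq⟩ := hsurj (Quotient.mk st ρ)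
    obtain ⟨ρ', rfl⟩ := q.exists_rep
    exact ⟨ρ', Quotient.exact hq⟩
  · intro σ₁ σ₂ ρ
    apply S.requiv_of_eq
    rw [S.act_stabilize, S.act_add]
  · intro ρ
    refine ⟨e, ?_⟩
    calc S.act e (S.act e ρ) = S.act (e + e) ρ := (S.act_add _ _ _).symm
      _ = S.act (S.stabilize (e + e)) ρ := (S.act_stabilize _ _).symm
      _ = S.act e ρ := by rw [he.2 e he.1]
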